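/- Let 𝔥_{2n+1} be the Heisenberg Lie algebra with orthonormal basis e_1,…,e_{2n+1} and brackets [e_{2i-1}, e_{2i}] = e_{2n+1}, and let J: 𝔳 → 𝔳 be the map on 𝔳 = span(e_1,…,e_{2n}) defined by J(e_{2i-1}) = e_{2i} and J(e_{2i}) = -e_{2i-1}. Then every skew-symmetric derivation D of 𝔥_{2n+1} restricted to 𝔳 commutes with J: JD = DJ on 𝔳. -/

import Mathlib

open RealInnerProductSpace

/-- The bracket of the Heisenberg Lie algebra `𝔥_{2n+1}` on `ℝ^{2n+1}` with orthonormal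
basis `e_0,…,e_{2n}` (0-indexed) and nonzero brackets `[e_{2i}, e_{2i+1}] = e_{2n}`. -/
noncomputable def heisBracket (n : ℕ)
    (X Y : EuclideanSpace ℝ (Fin (2 * n + 1))) : EuclideanSpace ℝ (Fin (2 * n + 1)) :=
  (∑ i : Fin n,
      (X ⟨2 * i, by have := i.isLt; omega⟩ * Y ⟨2 * i + 1, by have := i.isLt; omega⟩ -
       X ⟨2 * i + 1, by have := i.isLt; omega⟩ * Y ⟨2 * i, by have := i.isLt; omega⟩)) •
    EuclideanSpace.single ⟨2 * n, by omega⟩ 1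

/-- The symplectic form underlying the Heisenberg bracket. -/
noncomputable def heisOmega (n : ℕ)
    (X Y : EuclideanSpace ℝ (Fin (2 * n + 1))) : ℝ :=
  ∑ i : Fin n,
      (X ⟨2 * i, by have := i.isLt; omega⟩ * Y ⟨2 * i + 1, by have := i.isLt; omega⟩ -
       X ⟨2 * i + 1, by have := i.isLt; omega⟩ * Y ⟨2 * i, by have := i.isLt; omega⟩)

lemma heisBracket_eq (n : ℕ) (X Y : EuclideanSpace ℝ (Fin (2 * n + 1))) :
    heisBracket n X Y = heisOmega n X Y • EuclideanSpace.single ⟨2 * n, by omega⟩ 1 := rfl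

lemma euclidean_sum_apply {ι κ : Type*} [Fintype ι] [DecidableEq ι] (t : Finset κ)
    (f : κ → EuclideanSpace ℝ ι) (k : ι) : (∑ i ∈ t, f i) k = ∑ i ∈ t, f i k := by
  classical
  induction t using Finset.induction with
  | empty => simp
  | insert _ _ h ih => rw [Finset.sum_insert h, Finset.sum_insert h, PiLp.add_apply, ih]

/-- Decomposition of an element of `𝔳` in terms of the basis vectors `e_0,…,e_{2n-1}`. -/
lemma heisDecomp (n : ℕ) (U : EuclideanSpace ℝ (Fin (2 * n + 1)))
    (hU : U ⟨2 * n, by omega⟩ = 0) :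
    U = ∑ i : Fin n,
      (U ⟨2 * i, by have := i.isLt; omega⟩ •
          EuclideanSpace.single ⟨2 * i, by have := i.isLt; omega⟩ (1 : ℝ) +
       U ⟨2 * i + 1, by have := i.isLt; omega⟩ •
          EuclideanSpace.single ⟨2 * i + 1, by have := i.isLt; omega⟩ (1 : ℝ)) := by
  ext k
  rw [euclidean_sum_apply]
  simp only [PiLp.add_apply, PiLp.smul_apply, EuclideanSpace.single_apply, smul_eq_mul,
    mul_ite, mul_one, mul_zero]
  rcases lt_or_ge (k : ℕ) (2 * n) with hk | hk
  · have hin : (k : ℕ) / 2 < n := by omega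
    rw [Finset.sum_eq_single (⟨(k : ℕ) / 2, hin⟩ : Fin n)]
    · rcases Nat.even_or_odd (k : ℕ) with he | ho
      · obtain ⟨m, hm⟩ := he
        have h1 : k = (⟨2 * ((⟨(k : ℕ) / 2, hin⟩ : Fin n) : ℕ),
            by have : (k : ℕ) / 2 < n := hin; omega⟩ : Fin (2 * n + 1)) := by
          apply Fin.ext
          show (k : ℕ) = 2 * ((k : ℕ) / 2)
          omega
        have h2 : k ≠ (⟨2 * ((⟨(k : ℕ) / 2, hin⟩ : Fin n) : ℕ) + 1,
            by have : (k : ℕ) / 2 < n := hin; omega⟩ : Fin (2 * n + 1)) := by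
          intro h
          have h' : (k : ℕ) = 2 * ((k : ℕ) / 2) + 1 := congrArg Fin.val h
          omega
        rw [if_pos h1, if_neg h2, ← h1]
        ring
      · obtain ⟨m, hm⟩ := ho
        have h1 : k ≠ (⟨2 * ((⟨(k : ℕ) / 2, hin⟩ : Fin n) : ℕ),
            by have : (k : ℕ) / 2 < n := hin; omega⟩ : Fin (2 * n + 1)) := by
          intro h
          have h' : (k : ℕ) = 2 * ((k : ℕ) / 2) := congrArg Fin.val h
          omega
        have h2 : k = (⟨2 * ((⟨(k : ℕ) / 2, hin⟩ : Fin n) : ℕ) + 1,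
            by have : (k : ℕ) / 2 < n := hin; omega⟩ : Fin (2 * n + 1)) := by
          apply Fin.ext
          show (k : ℕ) = 2 * ((k : ℕ) / 2) + 1
          omega
        rw [if_neg h1, if_pos h2, ← h2]
        ring
    · intro i _ hi
      have hine : (i : ℕ) ≠ (k : ℕ) / 2 := by
        intro h
        exact hi (Fin.ext h)
      have h1 : k ≠ (⟨2 * (i : ℕ), by have := i.isLt; omega⟩ : Fin (2 * n + 1)) := by
        intro h
        have h' : (k : ℕ) = 2 * (i : ℕ) := congrArg Fin.val h
        omega
      have h2 : k ≠ (⟨2 * (i : ℕ) + 1, by have := i.isLt; omega⟩ : Fin (2 * n + 1)) := by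
        intro h
        have h' : (k : ℕ) = 2 * (i : ℕ) + 1 := congrArg Fin.val h
        omega
      rw [if_neg h1, if_neg h2]
      ring
    · intro h
      exact absurd (Finset.mem_univ _) h
  · have hk' : (k : ℕ) = 2 * n := by have := k.isLt; omega
    have hkeq : k = (⟨2 * n, by omega⟩ : Fin (2 * n + 1)) := Fin.ext hk'
    rw [hkeq, hU]
    rw [Finset.sum_eq_zero]
    intro i _
    have h1 : (⟨2 * n, by omega⟩ : Fin (2 * n + 1)) ≠
        (⟨2 * (i : ℕ), by have := i.isLt; omega⟩ : Fin (2 * n + 1)) := by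
      intro h
      have h' : 2 * n = 2 * (i : ℕ) := congrArg Fin.val h
      have := i.isLt
      omega
    have h2 : (⟨2 * n, by omega⟩ : Fin (2 * n + 1)) ≠
        (⟨2 * (i : ℕ) + 1, by have := i.isLt; omega⟩ : Fin (2 * n + 1)) := by
      intro h
      have h' : 2 * n = 2 * (i : ℕ) + 1 := congrArg Fin.val h
      omega
    rw [if_neg h1, if_neg h2]
    ring

set_option maxHeartbeats 2000000 in
/-- every skew-symmetric derivation `D` of `𝔥_{2n+1}` commutes with the
complex structure `J` (defined on `𝔳 = {X | X_{2n} = 0}` by `J e_{2i} = e_{2i+1}`,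
`J e_{2i+1} = -e_{2i}`) on the subspace `𝔳`. -/
theorem heisenberg_skew_derivation_commutes_J (n : ℕ) (hn : 0 < n)
    (D J : EuclideanSpace ℝ (Fin (2 * n + 1)) →ₗ[ℝ] EuclideanSpace ℝ (Fin (2 * n + 1)))
    (hder : ∀ X Y, D (heisBracket n X Y) =
      heisBracket n (D X) Y + heisBracket n X (D Y))
    (hskew : ∀ X Y, ⟪D X, Y⟫ = -⟪X, D Y⟫)
    (hJ1 : ∀ i : Fin n,
      J (EuclideanSpace.single ⟨2 * i, by have := i.isLt; omega⟩ 1) =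
        EuclideanSpace.single ⟨2 * i + 1, by have := i.isLt; omega⟩ 1)
    (hJ2 : ∀ i : Fin n,
      J (EuclideanSpace.single ⟨2 * i + 1, by have := i.isLt; omega⟩ 1) =
        -EuclideanSpace.single ⟨2 * i, by have := i.isLt; omega⟩ 1) :
    ∀ X : EuclideanSpace ℝ (Fin (2 * n + 1)),
      X ⟨2 * n, by omega⟩ = 0 → J (D X) = D (J X) := by
  set s : EuclideanSpace ℝ (Fin (2 * n + 1)) := EuclideanSpace.single ⟨2 * n, by omega⟩ 1
    with hs_def
  -- J applied to an element of 𝔳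
  have hJapp : ∀ U : EuclideanSpace ℝ (Fin (2 * n + 1)), U ⟨2 * n, by omega⟩ = 0 →
      J U = ∑ i : Fin n,
        (U ⟨2 * i, by have := i.isLt; omega⟩ •
            EuclideanSpace.single ⟨2 * i + 1, by have := i.isLt; omega⟩ (1 : ℝ) -
         U ⟨2 * i + 1, by have := i.isLt; omega⟩ •
            EuclideanSpace.single ⟨2 * i, by have := i.isLt; omega⟩ (1 : ℝ)) := by
    intro U hU
    conv_lhs => rw [heisDecomp n U hU]
    rw [map_sum]
    refine Finset.sum_congr rfl fun i _ => ?_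
    rw [map_add, map_smul, map_smul, hJ1 i, hJ2 i, smul_neg, ← sub_eq_add_neg]
  -- inner product of J U with anything is the symplectic form
  have hJinner : ∀ U V : EuclideanSpace ℝ (Fin (2 * n + 1)), U ⟨2 * n, by omega⟩ = 0 →
      ⟪J U, V⟫ = heisOmega n U V := by
    intro U V hU
    rw [hJapp U hU, sum_inner, heisOmega]
    refine Finset.sum_congr rfl fun i _ => ?_
    rw [inner_sub_left, real_inner_smul_left, real_inner_smul_left,
      EuclideanSpace.inner_single_left, EuclideanSpace.inner_single_left]
    simp only [map_one, one_mul]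
  -- inner products with s compute the last coordinate
  have hsinner : ∀ U : EuclideanSpace ℝ (Fin (2 * n + 1)),
      ⟪U, s⟫ = U ⟨2 * n, by omega⟩ := by
    intro U
    rw [hs_def, EuclideanSpace.inner_single_right]
    simp [starRingEnd_apply]
  -- D s = 0
  have hDs : D s = 0 := by
    have hDss : ⟪D s, s⟫ = 0 := by
      have h1 := hskew s s
      have h2 := real_inner_comm s (D s)
      linarith
    have hne01 : ((⟨0, by omega⟩ : Fin (2 * n + 1))) ≠ ⟨1, by omega⟩ := by
      intro h
      have h' : 0 = 1 := congrArg Fin.val h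
      omega
    have hbr : heisBracket n (EuclideanSpace.single ⟨0, by omega⟩ 1)
        (EuclideanSpace.single ⟨1, by omega⟩ 1) = s := by
      rw [heisBracket_eq]
      have homega1 : heisOmega n (EuclideanSpace.single ⟨0, by omega⟩ 1)
          (EuclideanSpace.single ⟨1, by omega⟩ 1) = 1 := by
        rw [heisOmega, Finset.sum_eq_single (⟨0, hn⟩ : Fin n)]
        · have i1 : (⟨2 * ((⟨0, hn⟩ : Fin n) : ℕ),
              by have := (⟨0, hn⟩ : Fin n).isLt; omega⟩ : Fin (2 * n + 1)) =
              ⟨0, by omega⟩ := Fin.ext (by show 2 * 0 = 0; rfl)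
          have i2 : (⟨2 * ((⟨0, hn⟩ : Fin n) : ℕ) + 1,
              by have := (⟨0, hn⟩ : Fin n).isLt; omega⟩ : Fin (2 * n + 1)) =
              ⟨1, by omega⟩ := Fin.ext (by show 2 * 0 + 1 = 1; rfl)
          rw [i1, i2, EuclideanSpace.single_apply, EuclideanSpace.single_apply,
            EuclideanSpace.single_apply, EuclideanSpace.single_apply,
            if_pos rfl, if_pos rfl, if_neg hne01.symm, if_neg hne01]
          norm_num
        · intro i _ hi
          have hi0 : (i : ℕ) ≠ 0 := fun h => hi (Fin.ext h)
          have h1 : (⟨2 * (i : ℕ), by have := i.isLt; omega⟩ : Fin (2 * n + 1)) ≠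
              ⟨0, by omega⟩ := by
            intro h
            have h' : 2 * (i : ℕ) = 0 := congrArg Fin.val h
            omega
          have h2 : (⟨2 * (i : ℕ) + 1, by have := i.isLt; omega⟩ : Fin (2 * n + 1)) ≠
              ⟨1, by omega⟩ := by
            intro h
            have h' : 2 * (i : ℕ) + 1 = 1 := congrArg Fin.val h
            omega
          have h3 : (⟨2 * (i : ℕ), by have := i.isLt; omega⟩ : Fin (2 * n + 1)) ≠
              ⟨1, by omega⟩ := by
            intro h
            have h' : 2 * (i : ℕ) = 1 := congrArg Fin.val h
            omega
          have h4 : (⟨2 * (i : ℕ) + 1, by have := i.isLt; omega⟩ : Fin (2 * n + 1)) ≠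
              ⟨0, by omega⟩ := by
            intro h
            have h' : 2 * (i : ℕ) + 1 = 0 := congrArg Fin.val h
            omega
          rw [EuclideanSpace.single_apply, EuclideanSpace.single_apply,
            EuclideanSpace.single_apply, EuclideanSpace.single_apply,
            if_neg h1, if_neg h2, if_neg h3, if_neg h4]
          ring
        · intro h
          exact absurd (Finset.mem_univ _) h
      rw [homega1, one_smul]
    have hD : D s = (heisOmega n (D (EuclideanSpace.single ⟨0, by omega⟩ 1))
          (EuclideanSpace.single ⟨1, by omega⟩ 1) +
        heisOmega n (EuclideanSpace.single ⟨0, by omega⟩ 1)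
          (D (EuclideanSpace.single ⟨1, by omega⟩ 1))) • s := by
      have h := hder (EuclideanSpace.single ⟨0, by omega⟩ 1)
        (EuclideanSpace.single ⟨1, by omega⟩ 1)
      rw [hbr, heisBracket_eq, heisBracket_eq, ← add_smul, ← hs_def] at h
      exact h
    have hcoef : heisOmega n (D (EuclideanSpace.single ⟨0, by omega⟩ 1))
          (EuclideanSpace.single ⟨1, by omega⟩ 1) +
        heisOmega n (EuclideanSpace.single ⟨0, by omega⟩ 1)
          (D (EuclideanSpace.single ⟨1, by omega⟩ 1)) = 0 := by
      have h2 : ⟪D s, s⟫ = heisOmega n (D (EuclideanSpace.single ⟨0, by omega⟩ 1))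
            (EuclideanSpace.single ⟨1, by omega⟩ 1) +
          heisOmega n (EuclideanSpace.single ⟨0, by omega⟩ 1)
            (D (EuclideanSpace.single ⟨1, by omega⟩ 1)) := by
        rw [hD, real_inner_smul_left, hs_def, real_inner_self_eq_norm_sq,
          EuclideanSpace.norm_single]
        simp
      rw [hDss] at h2
      linarith
    rw [hD, hcoef, zero_smul]
  -- the symplectic form identity for D
  have homega : ∀ X Y : EuclideanSpace ℝ (Fin (2 * n + 1)),
      heisOmega n (D X) Y = -heisOmega n X (D Y) := by
    intro X Y
    have h := hder X Y
    rw [heisBracket_eq, heisBracket_eq, heisBracket_eq, map_smul, hDs, smul_zero,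
      ← add_smul] at h
    have hsne : s ≠ 0 := by
      intro h0
      have := congrArg (fun u : EuclideanSpace ℝ (Fin (2 * n + 1)) => u ⟨2 * n, by omega⟩) h0
      simp [hs_def, EuclideanSpace.single_apply] at this
    have := (smul_eq_zero.mp h.symm).resolve_right hsne
    linarith
  -- D maps into 𝔳
  have hDv : ∀ X : EuclideanSpace ℝ (Fin (2 * n + 1)), (D X) ⟨2 * n, by omega⟩ = 0 := by
    intro X
    rw [← hsinner (D X), hskew X s, hDs]
    simp
  -- main argument
  intro X hX
  apply ext_inner_right ℝ
  intro V
  rw [hJinner (D X) V (hDv X), homega X V, ← hJinner X (D V) hX, hskew (J X) V]
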